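/- Let γ : ℤ → ℝ be non-negative, symmetric (γ_{-k} = γ_k), square-summable and non-increasing on ℕ, with γ_j > 0 wherever required. Let α ∈ ℂ^ℤ satisfy ∑_{j: γ_j ≠ 0} |α_j|²/γ_j² ≤ 1 and α_j = 0 when γ_j = 0. Then for every n ≥ 1, ∑_{|j|>n} |α_j|² + ∑_{|k|≤n} |∑_{θ≠0} α_{k+θ(2n+1)}|² ≤ 2γ_{n+1}² + (1/n) ∑_{k>n} γ_k². -/

import Mathlib

open Finset
set_option maxHeartbeats 1000000

-- Cauchy-Schwarz for tsums
lemma tsum_cs {I : Type*} {f g : I → ℝ} (hf : ∀ i, 0 ≤ f i) (hg : ∀ i, 0 ≤ g i)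
    (hf2 : Summable fun i => f i ^ 2) (hg2 : Summable fun i => g i ^ 2) :
    ∑' i, f i * g i ≤ Real.sqrt (∑' i, f i ^ 2) * Real.sqrt (∑' i, g i ^ 2) := by
  have hfg : Summable fun i => f i * g i := by
    refine Summable.of_nonneg_of_le (fun i => mul_nonneg (hf i) (hg i))
      (fun i => ?_) ((hf2.add hg2).div_const 2)
    have := two_mul_le_add_sq (f i) (g i)
    linarith
  have hA : (0:ℝ) ≤ ∑' i, f i ^ 2 := tsum_nonneg fun i => sq_nonneg _
  have hB : (0:ℝ) ≤ ∑' i, g i ^ 2 := tsum_nonneg fun i => sq_nonneg _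
  refine Summable.tsum_le_of_sum_le hfg fun s => ?_
  have h1 : (∑ i ∈ s, f i * g i) ^ 2 ≤ (∑ i ∈ s, f i ^ 2) * ∑ i ∈ s, g i ^ 2 :=
    Finset.sum_mul_sq_le_sq_mul_sq s f g
  have h2 : (∑ i ∈ s, f i ^ 2) * ∑ i ∈ s, g i ^ 2 ≤ (∑' i, f i ^ 2) * ∑' i, g i ^ 2 := by
    apply mul_le_mul (Summable.sum_le_tsum s (fun i _ => sq_nonneg _) hf2)
      (Summable.sum_le_tsum s (fun i _ => sq_nonneg _) hg2)
      (Finset.sum_nonneg fun i _ => sq_nonneg _) hA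
  have h3 : (0:ℝ) ≤ ∑ i ∈ s, f i * g i :=
    Finset.sum_nonneg fun i _ => mul_nonneg (hf i) (hg i)
  rw [← Real.sqrt_mul hA]
  rw [show Real.sqrt ((∑' i, f i ^ 2) * ∑' i, g i ^ 2) = Real.sqrt ((∑' i, f i ^ 2) * ∑' i, g i ^ 2) from rfl]
  exact (Real.le_sqrt h3 (mul_nonneg hA hB)).2 (h1.trans h2)

lemma mono' {γ : ℤ → ℝ} (hmono : ∀ k l : ℕ, k ≤ l → γ (l : ℤ) ≤ γ (k : ℤ))
    (a b : ℤ) (ha : 0 ≤ a) (hab : a ≤ b) : γ b ≤ γ a := by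
  obtain ⟨a', rfl⟩ := Int.eq_ofNat_of_zero_le ha
  obtain ⟨b', rfl⟩ := Int.eq_ofNat_of_zero_le (ha.trans hab)
  exact hmono a' b' (by exact_mod_cast hab)

lemma gabs {γ : ℤ → ℝ} (hsym : ∀ k : ℤ, γ (-k) = γ k) (j : ℤ) : γ j = γ |j| := by
  rcases abs_choice j with h | h
  · rw [h]
  · rw [h, hsym j]

lemma mono_abs {γ : ℤ → ℝ} (hsym : ∀ k : ℤ, γ (-k) = γ k)
    (hmono : ∀ k l : ℕ, k ≤ l → γ (l : ℤ) ≤ γ (k : ℤ))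
    (a b : ℤ) (h : |a| ≤ |b|) : γ b ≤ γ a := by
  rw [gabs hsym a, gabs hsym b]
  exact mono' hmono _ _ (abs_nonneg a) h

lemma Gbound {γ : ℤ → ℝ} (hnn : ∀ k, 0 ≤ γ k) (hsym : ∀ k : ℤ, γ (-k) = γ k)
    (hsum : Summable fun k : ℤ => γ k ^ 2)
    (hmono : ∀ k l : ℕ, k ≤ l → γ (l : ℤ) ≤ γ (k : ℤ))
    (n : ℕ) (hn : 1 ≤ n) (k : ℤ) (hk1 : -(n:ℤ) ≤ k) (hk2 : k ≤ (n:ℤ)) :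
    ∑' θ : {θ : ℤ // θ ≠ 0}, γ (k + θ.1 * (2 * n + 1)) ^ 2
      ≤ γ ((n:ℤ) + 1) ^ 2 + (1 / (n:ℝ)) * ∑' j : ℕ, γ ((n:ℤ) + 1 + j) ^ 2 := by
  have hM0 : (0:ℤ) < 2 * n + 1 := by omega
  have injS : Function.Injective (fun θ : ℤ => k + θ * (2 * (n:ℤ) + 1)) := by
    intro a b h
    dsimp only at h
    have : a * (2 * (n:ℤ) + 1) = b * (2 * (n:ℤ) + 1) := by linarith
    exact mul_right_cancel₀ hM0.ne' this
  set g : ℤ → ℝ := fun θ => if θ = 0 then 0 else γ (k + θ * (2 * n + 1)) ^ 2 with hg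
  have sshift : Summable fun θ : ℤ => γ (k + θ * (2 * (n:ℤ) + 1)) ^ 2 :=
    (hsum.comp_injective injS).congr fun θ => rfl
  have hg0 : ∀ θ, 0 ≤ g θ := by
    intro θ; rw [hg]; dsimp only; split <;> [rfl; positivity]
  have sg : Summable g := by
    refine Summable.of_nonneg_of_le hg0 (fun θ => ?_) sshift
    rw [hg]; dsimp only; split
    · positivity
    · exact le_rfl
  have eq1 : ∑' θ : {θ : ℤ // θ ≠ 0}, γ (k + θ.1 * (2 * n + 1)) ^ 2 = ∑' θ : ℤ, g θ := by
    rw [← tsum_subtype_eq_of_support_subset (f := g) (s := {θ : ℤ | θ ≠ 0})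
      (by intro θ hθ; by_contra h; simp only [Set.mem_setOf_eq, not_not] at h
          simp [hg, h] at hθ)]
    exact tsum_congr fun θ => by rw [hg]; exact (if_neg θ.2).symm
  have hinat : Function.Injective (fun l : ℕ => (l : ℤ)) := fun a b h => by simpa using h
  have hineg : Function.Injective (fun l : ℕ => -((l:ℤ) + 1)) := fun a b h => by
    dsimp only at h; omega
  have sgl : Summable fun l : ℕ => g l := (sg.comp_injective hinat).congr fun l => rfl
  have sgneg : Summable fun l : ℕ => g (-((l:ℤ) + 1)) :=
    (sg.comp_injective hineg).congr fun l => rfl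
  have split : ∑' θ : ℤ, g θ = (∑' l : ℕ, g l) + ∑' l : ℕ, g (-((l:ℤ) + 1)) :=
    tsum_of_nat_of_neg_add_one sgl sgneg
  have hiplus : Function.Injective (fun l : ℕ => k + ((l:ℤ) + 1) * (2 * (n:ℤ) + 1)) := by
    intro a b h
    dsimp only at h
    have : ((a:ℤ) + 1) * (2 * (n:ℤ) + 1) = ((b:ℤ) + 1) * (2 * (n:ℤ) + 1) := by linarith
    have := mul_right_cancel₀ hM0.ne' this
    omega
  have himinus : Function.Injective (fun l : ℕ => k - ((l:ℤ) + 1) * (2 * (n:ℤ) + 1)) := by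
    intro a b h
    dsimp only at h
    have : ((a:ℤ) + 1) * (2 * (n:ℤ) + 1) = ((b:ℤ) + 1) * (2 * (n:ℤ) + 1) := by linarith
    have := mul_right_cancel₀ hM0.ne' this
    omega
  have spos : Summable fun l : ℕ => γ (k + ((l:ℤ) + 1) * (2 * n + 1)) ^ 2 :=
    (hsum.comp_injective hiplus).congr fun l => rfl
  have sneg : Summable fun l : ℕ => γ (k - ((l:ℤ) + 1) * (2 * n + 1)) ^ 2 :=
    (hsum.comp_injective himinus).congr fun l => rfl
  have eq2 : (∑' l : ℕ, g l) = ∑' l : ℕ, γ (k + ((l:ℤ) + 1) * (2 * n + 1)) ^ 2 := by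
    rw [Summable.tsum_eq_zero_add sgl]
    have h0 : g ((0:ℕ):ℤ) = 0 := by rw [hg]; simp
    rw [h0, zero_add]
    refine tsum_congr fun l => ?_
    simp only [hg]
    have hne : ((l + 1 : ℕ) : ℤ) ≠ 0 := by omega
    rw [if_neg hne]
    have : ((l + 1 : ℕ) : ℤ) = (l : ℤ) + 1 := by push_cast; ring
    rw [this]
  have eq3 : (∑' l : ℕ, g (-((l:ℤ) + 1))) = ∑' l : ℕ, γ (k - ((l:ℤ) + 1) * (2 * n + 1)) ^ 2 := by
    refine tsum_congr fun l => ?_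
    simp only [hg]
    have hne : -((l:ℤ) + 1) ≠ 0 := by omega
    rw [if_neg hne]
    have : k + -((l:ℤ) + 1) * (2 * n + 1) = k - ((l:ℤ) + 1) * (2 * n + 1) := by ring
    rw [this]
  -- pairwise bound
  have pair : ∀ c : ℤ, 2 * (n:ℤ) + 1 ≤ c →
      γ (k + c) ^ 2 + γ (k - c) ^ 2 ≤ γ (c - n) ^ 2 + γ c ^ 2 := by
    intro c hc
    have e2 : γ (k - c) = γ (c - k) := by
      have h' : k - c = -(c - k) := by ring
      rw [h', hsym]
    rcases le_or_gt 0 k with hk0 | hk0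
    · have e1 : γ (k + c) ≤ γ c := mono' hmono c (k + c) (by omega) (by omega)
      have e3 : γ (c - k) ≤ γ (c - n) := mono' hmono (c - n) (c - k) (by omega) (by omega)
      have q1 : γ (k + c) ^ 2 ≤ γ c ^ 2 := pow_le_pow_left₀ (hnn _) e1 2
      have q2 : γ (k - c) ^ 2 ≤ γ (c - n) ^ 2 := by
        rw [e2]; exact pow_le_pow_left₀ (hnn _) e3 2
      linarith
    · have e1 : γ (k + c) ≤ γ (c - n) := mono' hmono (c - n) (k + c) (by omega) (by omega)
      have e3 : γ (c - k) ≤ γ c := mono' hmono c (c - k) (by omega) (by omega)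
      have q1 : γ (k + c) ^ 2 ≤ γ (c - n) ^ 2 := pow_le_pow_left₀ (hnn _) e1 2
      have q2 : γ (k - c) ^ 2 ≤ γ c ^ 2 := by
        rw [e2]; exact pow_le_pow_left₀ (hnn _) e3 2
      linarith
  -- summability of the target sequences
  have hi1 : Function.Injective (fun l : ℕ => ((l:ℤ) + 1) * (2 * (n:ℤ) + 1)) := by
    intro a b h; dsimp only at h
    have := mul_right_cancel₀ hM0.ne' h; omega
  have hi2 : Function.Injective (fun l : ℕ => ((l:ℤ) + 1) * (2 * (n:ℤ) + 1) - n) := by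
    intro a b h; dsimp only at h
    have : ((a:ℤ) + 1) * (2 * (n:ℤ) + 1) = ((b:ℤ) + 1) * (2 * (n:ℤ) + 1) := by linarith
    have := mul_right_cancel₀ hM0.ne' this; omega
  have hi3 : Function.Injective (fun l : ℕ => ((l:ℤ) + 2) * (2 * (n:ℤ) + 1) - n) := by
    intro a b h; dsimp only at h
    have : ((a:ℤ) + 2) * (2 * (n:ℤ) + 1) = ((b:ℤ) + 2) * (2 * (n:ℤ) + 1) := by linarith
    have := mul_right_cancel₀ hM0.ne' this; omega
  have s1 : Summable fun l : ℕ => γ (((l:ℤ) + 1) * (2 * n + 1)) ^ 2 :=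
    (hsum.comp_injective hi1).congr fun l => rfl
  have s2 : Summable fun l : ℕ => γ (((l:ℤ) + 1) * (2 * n + 1) - n) ^ 2 :=
    (hsum.comp_injective hi2).congr fun l => rfl
  have s3 : Summable fun l : ℕ => γ (((l:ℤ) + 2) * (2 * n + 1) - n) ^ 2 :=
    (hsum.comp_injective hi3).congr fun l => rfl
  -- step: bound the ℤ-sum by the structured sum
  have step1 : ∑' θ : ℤ, g θ ≤
      ∑' l : ℕ, (γ (((l:ℤ) + 1) * (2 * n + 1) - n) ^ 2 + γ (((l:ℤ) + 1) * (2 * n + 1)) ^ 2) := by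
    rw [split, eq2, eq3, ← Summable.tsum_add spos sneg]
    refine Summable.tsum_le_tsum (fun l => ?_) (spos.add sneg) (s2.add s1)
    have hc : 2 * (n:ℤ) + 1 ≤ ((l:ℤ) + 1) * (2 * (n:ℤ) + 1) := by nlinarith [Int.ofNat_nonneg l]
    exact pair _ hc
  -- block machinery
  set f : ℕ → ℝ := fun j => γ ((n:ℤ) + 1 + j) ^ 2 with hf
  have sf : Summable f :=
    (hsum.comp_injective (i := fun j : ℕ => (n:ℤ) + 1 + j)
      (fun a b h => by dsimp only at h; omega)).congr fun j => rfl
  set W : ℕ → Finset ℕ := fun l => Finset.Ioc (l * (2 * n + 1)) (l * (2 * n + 1) + (2 * n + 1))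
    with hW
  have hWdisj : ∀ a b : ℕ, a < b → Disjoint (W a) (W b) := by
    intro a b hab
    refine Finset.disjoint_left.2 fun j h1 h2 => ?_
    simp only [hW, Finset.mem_Ioc] at h1 h2
    have hmul : (a + 1) * (2 * n + 1) ≤ b * (2 * n + 1) :=
      Nat.mul_le_mul_right _ (by omega)
    have hexp : (a + 1) * (2 * n + 1) = a * (2 * n + 1) + (2 * n + 1) := by ring
    have := h1.2
    have := h2.1
    omega
  have hkey : ∀ u : Finset ℕ, ∑ l ∈ u, ∑ j ∈ W l, f j ≤ ∑' j, f j := by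
    intro u
    rw [← Finset.sum_biUnion (by
      intro a _ b _ hab
      rcases lt_or_gt_of_ne hab with h | h
      · exact hWdisj a b h
      · exact (hWdisj b a h).symm)]
    exact Summable.sum_le_tsum _ (fun j _ => by rw [hf]; positivity) sf
  have hcnn : ∀ l, (0:ℝ) ≤ ∑ j ∈ W l, f j :=
    fun l => Finset.sum_nonneg fun j _ => by rw [hf]; positivity
  have sc : Summable (fun l : ℕ => ∑ j ∈ W l, f j) := summable_of_sum_le hcnn hkey
  have hcsum : ∑' l : ℕ, ∑ j ∈ W l, f j ≤ ∑' j, f j := Summable.tsum_le_of_sum_le sc hkey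
  -- per-block bound
  have hblock : ∀ l : ℕ,
      (n:ℝ) * (γ (((l:ℤ) + 2) * (2 * n + 1) - n) ^ 2 + γ (((l:ℤ) + 1) * (2 * n + 1)) ^ 2)
        ≤ ∑ j ∈ W l, f j := by
    intro l
    have hsplit : ∑ j ∈ W l, f j =
        (∑ j ∈ Finset.Ioc (l * (2 * n + 1)) (l * (2 * n + 1) + n), f j) +
          ∑ j ∈ Finset.Ioc (l * (2 * n + 1) + n) (l * (2 * n + 1) + (2 * n + 1)), f j := by
      rw [hW]
      exact (Finset.sum_Ioc_consecutive _ (by omega) (by omega)).symm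
    have hb1 : ∀ j ∈ Finset.Ioc (l * (2 * n + 1)) (l * (2 * n + 1) + n),
        γ (((l:ℤ) + 1) * (2 * n + 1)) ^ 2 ≤ f j := by
      intro j hj
      rw [Finset.mem_Ioc] at hj
      have hj2 : (j:ℤ) ≤ (l:ℤ) * (2 * n + 1) + n := by exact_mod_cast hj.2
      have hexp : ((l:ℤ) + 1) * (2 * (n:ℤ) + 1) = (l:ℤ) * (2 * n + 1) + (2 * n + 1) := by ring
      have harg : (n:ℤ) + 1 + j ≤ ((l:ℤ) + 1) * (2 * n + 1) := by
        rw [hexp]; linarith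
      rw [hf]
      exact pow_le_pow_left₀ (hnn _) (mono' hmono _ _ (by positivity) harg) 2
    have hb2 : ∀ j ∈ Finset.Ioc (l * (2 * n + 1) + n) (l * (2 * n + 1) + (2 * n + 1)),
        γ (((l:ℤ) + 2) * (2 * n + 1) - n) ^ 2 ≤ f j := by
      intro j hj
      rw [Finset.mem_Ioc] at hj
      have hj2 : (j:ℤ) ≤ (l:ℤ) * (2 * n + 1) + (2 * n + 1) := by exact_mod_cast hj.2
      have hexp : ((l:ℤ) + 2) * (2 * (n:ℤ) + 1) - n = (l:ℤ) * (2 * n + 1) + (3 * n + 2) := by ring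
      have harg : (n:ℤ) + 1 + j ≤ ((l:ℤ) + 2) * (2 * n + 1) - n := by
        rw [hexp]; linarith
      rw [hf]
      exact pow_le_pow_left₀ (hnn _) (mono' hmono _ _ (by positivity) harg) 2
    have c1 : (n:ℝ) * γ (((l:ℤ) + 1) * (2 * n + 1)) ^ 2 ≤
        ∑ j ∈ Finset.Ioc (l * (2 * n + 1)) (l * (2 * n + 1) + n), f j := by
      have := Finset.card_nsmul_le_sum _ _ _ hb1
      rwa [Nat.card_Ioc, Nat.add_sub_cancel_left, nsmul_eq_mul] at this
    have c2 : ((n:ℝ) + 1) * γ (((l:ℤ) + 2) * (2 * n + 1) - n) ^ 2 ≤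
        ∑ j ∈ Finset.Ioc (l * (2 * n + 1) + n) (l * (2 * n + 1) + (2 * n + 1)), f j := by
      have := Finset.card_nsmul_le_sum _ _ _ hb2
      rwa [Nat.card_Ioc, show l * (2 * n + 1) + (2 * n + 1) - (l * (2 * n + 1) + n) = n + 1
        by omega, nsmul_eq_mul, Nat.cast_add, Nat.cast_one] at this
    have c2' : (n:ℝ) * γ (((l:ℤ) + 2) * (2 * n + 1) - n) ^ 2 ≤
        ∑ j ∈ Finset.Ioc (l * (2 * n + 1) + n) (l * (2 * n + 1) + (2 * n + 1)), f j := by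
      refine le_trans ?_ c2
      have : (0:ℝ) ≤ γ (((l:ℤ) + 2) * (2 * n + 1) - n) ^ 2 := sq_nonneg _
      nlinarith
    rw [hsplit, mul_add]
    linarith
  -- tail bound
  have hnR : (0:ℝ) < n := by exact_mod_cast hn
  have tail : ∑' l : ℕ,
      (γ (((l:ℤ) + 2) * (2 * n + 1) - n) ^ 2 + γ (((l:ℤ) + 1) * (2 * n + 1)) ^ 2)
        ≤ (1 / (n:ℝ)) * ∑' j : ℕ, f j := by
    have e : ∀ l : ℕ,
        γ (((l:ℤ) + 2) * (2 * n + 1) - n) ^ 2 + γ (((l:ℤ) + 1) * (2 * n + 1)) ^ 2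
          ≤ (1 / (n:ℝ)) * ∑ j ∈ W l, f j := by
      intro l
      rw [one_div, inv_mul_eq_div, le_div_iff₀ hnR]
      linarith [hblock l]
    calc ∑' l : ℕ, (γ (((l:ℤ) + 2) * (2 * n + 1) - n) ^ 2 + γ (((l:ℤ) + 1) * (2 * n + 1)) ^ 2)
        ≤ ∑' l : ℕ, (1 / (n:ℝ)) * ∑ j ∈ W l, f j :=
          Summable.tsum_le_tsum e (s3.add s1) (sc.mul_left _)
      _ = (1 / (n:ℝ)) * ∑' l : ℕ, ∑ j ∈ W l, f j := tsum_mul_left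
      _ ≤ (1 / (n:ℝ)) * ∑' j : ℕ, f j := by
          exact mul_le_mul_of_nonneg_left hcsum (by positivity)
  -- assemble
  have split2 : ∑' l : ℕ, (γ (((l:ℤ) + 1) * (2 * n + 1) - n) ^ 2 + γ (((l:ℤ) + 1) * (2 * n + 1)) ^ 2)
      = (∑' l : ℕ, γ (((l:ℤ) + 1) * (2 * n + 1) - n) ^ 2) +
        ∑' l : ℕ, γ (((l:ℤ) + 1) * (2 * n + 1)) ^ 2 := Summable.tsum_add s2 s1
  have splita : (∑' l : ℕ, γ (((l:ℤ) + 1) * (2 * n + 1) - n) ^ 2)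
      = γ ((n:ℤ) + 1) ^ 2 + ∑' l : ℕ, γ (((l:ℤ) + 2) * (2 * n + 1) - n) ^ 2 := by
    rw [Summable.tsum_eq_zero_add s2]
    have h1 : (((0:ℕ):ℤ) + 1) * (2 * (n:ℤ) + 1) - n = (n:ℤ) + 1 := by push_cast; ring
    have h2 : ∀ l : ℕ, (((l + 1 : ℕ):ℤ) + 1) * (2 * (n:ℤ) + 1) - n
        = ((l:ℤ) + 2) * (2 * (n:ℤ) + 1) - n := fun l => by push_cast; ring
    rw [h1]
    refine congrArg (γ ((n:ℤ) + 1) ^ 2 + ·) (tsum_congr fun l => by rw [h2 l])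
  rw [eq1]
  calc ∑' θ : ℤ, g θ
      ≤ ∑' l : ℕ, (γ (((l:ℤ) + 1) * (2 * n + 1) - n) ^ 2 + γ (((l:ℤ) + 1) * (2 * n + 1)) ^ 2) :=
        step1
    _ = γ ((n:ℤ) + 1) ^ 2 + ((∑' l : ℕ, γ (((l:ℤ) + 2) * (2 * n + 1) - n) ^ 2) +
          ∑' l : ℕ, γ (((l:ℤ) + 1) * (2 * n + 1)) ^ 2) := by
        rw [split2, splita]; ring
    _ = γ ((n:ℤ) + 1) ^ 2 + ∑' l : ℕ,
          (γ (((l:ℤ) + 2) * (2 * n + 1) - n) ^ 2 + γ (((l:ℤ) + 1) * (2 * n + 1)) ^ 2) := by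
        rw [Summable.tsum_add s3 s1]
    _ ≤ γ ((n:ℤ) + 1) ^ 2 + (1 / (n:ℝ)) * ∑' j : ℕ, f j := by
        exact add_le_add le_rfl tail
    _ = γ ((n:ℤ) + 1) ^ 2 + (1 / (n:ℝ)) * ∑' j : ℕ, γ ((n:ℤ) + 1 + j) ^ 2 := rfl

lemma Asum {S : ℤ → ℝ} (hS0 : ∀ j, 0 ≤ S j) (hS : Summable S) (hS1 : ∑' j, S j ≤ 1)
    (n : ℕ) :
    ∑ k ∈ Finset.Icc (-(n:ℤ)) (n:ℤ), ∑' θ : {θ : ℤ // θ ≠ 0}, S (k + θ.1 * (2 * n + 1)) ≤ 1 := by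
  classical
  have hM0 : (0:ℤ) < 2 * n + 1 := by omega
  set F : ℤ → ℤ → ℝ := fun k j => if (2 * (n:ℤ) + 1) ∣ (j - k) ∧ j ≠ k then S j else 0 with hF
  have hF0 : ∀ k j, 0 ≤ F k j := by
    intro k j; rw [hF]; dsimp only; split
    · exact hS0 j
    · exact le_rfl
  have hFle : ∀ k j, F k j ≤ S j := by
    intro k j; rw [hF]; dsimp only; split
    · exact le_rfl
    · exact hS0 j
  have sF : ∀ k : ℤ, Summable (F k) := fun k =>
    Summable.of_nonneg_of_le (hF0 k) (hFle k) hS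
  have hAeq : ∀ k : ℤ, (∑' θ : {θ : ℤ // θ ≠ 0}, S (k + θ.1 * (2 * n + 1))) = ∑' j : ℤ, F k j := by
    intro k
    have hik : Function.Injective (fun θ : {θ : ℤ // θ ≠ 0} => k + θ.1 * (2 * (n:ℤ) + 1)) := by
      intro a b h
      dsimp only at h
      have : a.1 * (2 * (n:ℤ) + 1) = b.1 * (2 * (n:ℤ) + 1) := by linarith
      exact Subtype.ext (mul_right_cancel₀ hM0.ne' this)
    have hsupp : Function.support (F k) ⊆
        Set.range (fun θ : {θ : ℤ // θ ≠ 0} => k + θ.1 * (2 * (n:ℤ) + 1)) := by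
      intro j hj
      rw [Function.mem_support, hF] at hj
      dsimp only at hj
      by_cases hcond : (2 * (n:ℤ) + 1) ∣ (j - k) ∧ j ≠ k
      · obtain ⟨⟨c, hc⟩, hne⟩ := hcond
        have hc0 : c ≠ 0 := by
          intro h; apply hne; rw [h, mul_zero] at hc; omega
        exact ⟨⟨c, hc0⟩, by dsimp only; linarith [hc, mul_comm c (2 * (n:ℤ) + 1)]⟩
      · rw [if_neg hcond] at hj; exact absurd rfl hj
    have key := hik.tsum_eq hsupp
    rw [← key]
    refine tsum_congr fun θ => ?_
    rw [hF]
    dsimp only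
    rw [if_pos]
    constructor
    · have : k + θ.1 * (2 * (n:ℤ) + 1) - k = θ.1 * (2 * (n:ℤ) + 1) := by ring
      rw [this]
      exact Dvd.intro_left θ.1 rfl
    · intro h
      have h2 : θ.1 * (2 * (n:ℤ) + 1) = 0 := by linarith
      rcases mul_eq_zero.1 h2 with h3 | h3
      · exact θ.2 h3
      · omega
  have pointwise : ∀ j : ℤ, (∑ k ∈ Finset.Icc (-(n:ℤ)) (n:ℤ), F k j) ≤ S j := by
    intro j
    by_cases hex : ∃ k0 ∈ Finset.Icc (-(n:ℤ)) (n:ℤ), F k0 j ≠ 0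
    · obtain ⟨k0, hk0, hne⟩ := hex
      rw [Finset.sum_eq_single_of_mem k0 hk0 ?uniq]
      · exact hFle k0 j
      case uniq =>
        intro b hb hbne
        by_contra hFb
        have hcb : (2 * (n:ℤ) + 1) ∣ (j - b) ∧ j ≠ b := by
          by_contra hc; rw [hF] at hFb; dsimp only at hFb; rw [if_neg hc] at hFb
          exact hFb rfl
        have hck : (2 * (n:ℤ) + 1) ∣ (j - k0) ∧ j ≠ k0 := by
          by_contra hc; rw [hF] at hne; dsimp only at hne; rw [if_neg hc] at hne
          exact hne rfl
        have hdvd : (2 * (n:ℤ) + 1) ∣ (k0 - b) := by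
          have := hcb.1.sub hck.1
          have he : j - b - (j - k0) = k0 - b := by ring
          rwa [he] at this
        have : k0 - b = 0 := by
          refine Int.eq_zero_of_dvd_of_natAbs_lt_natAbs hdvd ?_
          rw [Finset.mem_Icc] at hb hk0
          omega
        exact hbne (by omega)
    · push_neg at hex
      rw [Finset.sum_eq_zero fun k hk => hex k hk]
      exact hS0 j
  have ssum : Summable fun j : ℤ => ∑ k ∈ Finset.Icc (-(n:ℤ)) (n:ℤ), F k j :=
    Summable.of_nonneg_of_le (fun j => Finset.sum_nonneg fun k _ => hF0 k j) pointwise hS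
  calc ∑ k ∈ Finset.Icc (-(n:ℤ)) (n:ℤ), ∑' θ : {θ : ℤ // θ ≠ 0}, S (k + θ.1 * (2 * n + 1))
      = ∑ k ∈ Finset.Icc (-(n:ℤ)) (n:ℤ), ∑' j : ℤ, F k j :=
        Finset.sum_congr rfl fun k _ => hAeq k
    _ = ∑' j : ℤ, ∑ k ∈ Finset.Icc (-(n:ℤ)) (n:ℤ), F k j :=
        (Summable.tsum_finsetSum fun k _ => sF k).symm
    _ ≤ ∑' j : ℤ, S j := Summable.tsum_le_tsum pointwise ssum hS
    _ ≤ 1 := hS1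

theorem stmt_10 (γ : ℤ → ℝ) (hnn : ∀ k, 0 ≤ γ k) (hsym : ∀ k : ℤ, γ (-k) = γ k)
    (hsum : Summable fun k : ℤ => γ k ^ 2)
    (hmono : ∀ k l : ℕ, k ≤ l → γ (l : ℤ) ≤ γ (k : ℤ))
    (α : ℤ → ℂ) (hα0 : ∀ j : ℤ, γ j = 0 → α j = 0)
    (hαsum : Summable fun j : ℤ => if γ j = 0 then 0 else ‖α j‖ ^ 2 / γ j ^ 2)
    (hα1 : (∑' j : ℤ, if γ j = 0 then 0 else ‖α j‖ ^ 2 / γ j ^ 2) ≤ 1)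
    (n : ℕ) (hn : 1 ≤ n) :
    (∑' j : {j : ℤ // (n : ℤ) < |j|}, ‖α j.1‖ ^ 2)
      + ∑ k ∈ Finset.Icc (-(n : ℤ)) (n : ℤ),
          ‖∑' θ : {θ : ℤ // θ ≠ 0}, α (k + θ.1 * (2 * n + 1))‖ ^ 2
    ≤ 2 * γ ((n : ℤ) + 1) ^ 2 + (1 / (n : ℝ)) * ∑' k : ℕ, γ ((n : ℤ) + 1 + k) ^ 2 := by
  classical
  set S : ℤ → ℝ := fun j => if γ j = 0 then 0 else ‖α j‖ ^ 2 / γ j ^ 2 with hSdef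
  have hS0 : ∀ j, 0 ≤ S j := by
    intro j; rw [hSdef]; dsimp only; split
    · exact le_rfl
    · positivity
  have hSsum : Summable S := hαsum
  have hS1 : ∑' j : ℤ, S j ≤ 1 := hα1
  have hSnorm : ∀ j, ‖α j‖ ^ 2 = S j * γ j ^ 2 := by
    intro j
    rw [hSdef]; dsimp only
    by_cases h : γ j = 0
    · rw [if_pos h, hα0 j h]
      simp
    · rw [if_neg h, div_mul_cancel₀]
      exact pow_ne_zero _ h
  have hSnorm' : ∀ j, ‖α j‖ = Real.sqrt (S j) * γ j := by
    intro j
    have h1 : ‖α j‖ = Real.sqrt (‖α j‖ ^ 2) := (Real.sqrt_sq (norm_nonneg _)).symm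
    rw [h1, hSnorm j, Real.sqrt_mul (hS0 j), Real.sqrt_sq (hnn j)]
  have hM0 : (0:ℤ) < 2 * n + 1 := by omega
  -- α is absolutely summable
  have hnorm_sum : Summable fun j : ℤ => ‖α j‖ := by
    refine Summable.of_nonneg_of_le (fun j => norm_nonneg _) (fun j => ?_)
      ((hSsum.add hsum).div_const 2)
    rw [hSnorm' j]
    have h2 := two_mul_le_add_sq (Real.sqrt (S j)) (γ j)
    rw [Real.sq_sqrt (hS0 j)] at h2
    linarith
  -- ℓ² summability of α
  have hα2 : Summable fun j : ℤ => ‖α j‖ ^ 2 := by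
    refine Summable.of_nonneg_of_le (fun j => sq_nonneg _) (fun j => ?_) (hSsum.mul_right (γ 0 ^ 2))
    rw [hSnorm j]
    refine mul_le_mul_of_nonneg_left ?_ (hS0 j)
    refine pow_le_pow_left₀ (hnn j) ?_ 2
    rw [gabs hsym j, gabs hsym 0]
    exact mono' hmono _ _ (by simp) (by simp [abs_nonneg])
  -- the subtype mass is at most 1
  have hsubmass : ∀ s : Set ℤ, (∑' j : s, S j.1) ≤ 1 := by
    intro s
    rw [tsum_subtype s S]
    refine le_trans (Summable.tsum_le_tsum (fun j => ?_) (hSsum.indicator s) hSsum) hS1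
    by_cases h : j ∈ s
    · rw [Set.indicator_of_mem h]
    · rw [Set.indicator_of_notMem h]; exact hS0 j
  set Bd : ℝ := γ ((n:ℤ) + 1) ^ 2 + (1 / (n:ℝ)) * ∑' k : ℕ, γ ((n:ℤ) + 1 + k) ^ 2 with hBd
  have hBd0 : 0 ≤ Bd := by
    rw [hBd]
    have : (0:ℝ) ≤ ∑' k : ℕ, γ ((n:ℤ) + 1 + k) ^ 2 := tsum_nonneg fun k => sq_nonneg _
    positivity
  -- Part 1
  have part1 : (∑' j : {j : ℤ // (n : ℤ) < |j|}, ‖α j.1‖ ^ 2) ≤ γ ((n:ℤ) + 1) ^ 2 := by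
    have hpt : ∀ j : {j : ℤ // (n : ℤ) < |j|}, ‖α j.1‖ ^ 2 ≤ S j.1 * γ ((n:ℤ) + 1) ^ 2 := by
      intro j
      rw [hSnorm j.1]
      refine mul_le_mul_of_nonneg_left ?_ (hS0 j.1)
      refine pow_le_pow_left₀ (hnn _) ?_ 2
      rw [gabs hsym j.1]
      exact mono' hmono _ _ (by omega) (by have := j.2; omega)
    have sL : Summable fun j : {j : ℤ // (n : ℤ) < |j|} => ‖α j.1‖ ^ 2 :=
      (hα2.subtype _).congr fun j => rfl
    have sR : Summable fun j : {j : ℤ // (n : ℤ) < |j|} => S j.1 * γ ((n:ℤ) + 1) ^ 2 :=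
      ((hSsum.subtype _).mul_right _).congr fun j => rfl
    calc (∑' j : {j : ℤ // (n : ℤ) < |j|}, ‖α j.1‖ ^ 2)
        ≤ ∑' j : {j : ℤ // (n : ℤ) < |j|}, S j.1 * γ ((n:ℤ) + 1) ^ 2 :=
          Summable.tsum_le_tsum hpt sL sR
      _ = (∑' j : {j : ℤ // (n : ℤ) < |j|}, S j.1) * γ ((n:ℤ) + 1) ^ 2 := tsum_mul_right
      _ ≤ 1 * γ ((n:ℤ) + 1) ^ 2 :=
          mul_le_mul_of_nonneg_right (hsubmass _) (sq_nonneg _)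
      _ = γ ((n:ℤ) + 1) ^ 2 := one_mul _
  -- Part 2 : per-k Cauchy–Schwarz
  have part2 : ∀ k ∈ Finset.Icc (-(n : ℤ)) (n : ℤ),
      ‖∑' θ : {θ : ℤ // θ ≠ 0}, α (k + θ.1 * (2 * n + 1))‖ ^ 2
        ≤ (∑' θ : {θ : ℤ // θ ≠ 0}, S (k + θ.1 * (2 * n + 1))) * Bd := by
    intro k hk
    rw [Finset.mem_Icc] at hk
    have hik : Function.Injective (fun θ : {θ : ℤ // θ ≠ 0} => k + θ.1 * (2 * (n:ℤ) + 1)) := by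
      intro a b h
      dsimp only at h
      have : a.1 * (2 * (n:ℤ) + 1) = b.1 * (2 * (n:ℤ) + 1) := by linarith
      exact Subtype.ext (mul_right_cancel₀ hM0.ne' this)
    have snorm : Summable fun θ : {θ : ℤ // θ ≠ 0} => ‖α (k + θ.1 * (2 * n + 1))‖ :=
      (hnorm_sum.comp_injective hik).congr fun θ => rfl
    have sS : Summable fun θ : {θ : ℤ // θ ≠ 0} => S (k + θ.1 * (2 * n + 1)) :=
      (hSsum.comp_injective hik).congr fun θ => rfl
    have sG : Summable fun θ : {θ : ℤ // θ ≠ 0} => γ (k + θ.1 * (2 * n + 1)) ^ 2 :=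
      (hsum.comp_injective hik).congr fun θ => rfl
    have hf2 : Summable fun θ : {θ : ℤ // θ ≠ 0} => Real.sqrt (S (k + θ.1 * (2 * n + 1))) ^ 2 :=
      sS.congr fun θ => (Real.sq_sqrt (hS0 _)).symm
    have h1 : ‖∑' θ : {θ : ℤ // θ ≠ 0}, α (k + θ.1 * (2 * n + 1))‖
        ≤ ∑' θ : {θ : ℤ // θ ≠ 0}, ‖α (k + θ.1 * (2 * n + 1))‖ := norm_tsum_le_tsum_norm snorm
    have h2 : (∑' θ : {θ : ℤ // θ ≠ 0}, ‖α (k + θ.1 * (2 * n + 1))‖)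
        = ∑' θ : {θ : ℤ // θ ≠ 0},
            Real.sqrt (S (k + θ.1 * (2 * n + 1))) * γ (k + θ.1 * (2 * n + 1)) :=
      tsum_congr fun θ => hSnorm' _
    have h3 := tsum_cs (f := fun θ : {θ : ℤ // θ ≠ 0} => Real.sqrt (S (k + θ.1 * (2 * n + 1))))
      (g := fun θ : {θ : ℤ // θ ≠ 0} => γ (k + θ.1 * (2 * n + 1)))
      (fun θ => Real.sqrt_nonneg _) (fun θ => hnn _) hf2 sG
    have h4 : (∑' θ : {θ : ℤ // θ ≠ 0}, Real.sqrt (S (k + θ.1 * (2 * n + 1))) ^ 2)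
        = ∑' θ : {θ : ℤ // θ ≠ 0}, S (k + θ.1 * (2 * n + 1)) :=
      tsum_congr fun θ => Real.sq_sqrt (hS0 _)
    rw [h4] at h3
    have hA0 : (0:ℝ) ≤ ∑' θ : {θ : ℤ // θ ≠ 0}, S (k + θ.1 * (2 * n + 1)) :=
      tsum_nonneg fun θ => hS0 _
    have hG0 : (0:ℝ) ≤ ∑' θ : {θ : ℤ // θ ≠ 0}, γ (k + θ.1 * (2 * n + 1)) ^ 2 :=
      tsum_nonneg fun θ => sq_nonneg _
    have h5 : ‖∑' θ : {θ : ℤ // θ ≠ 0}, α (k + θ.1 * (2 * n + 1))‖ ^ 2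
        ≤ (∑' θ : {θ : ℤ // θ ≠ 0}, S (k + θ.1 * (2 * n + 1)))
          * ∑' θ : {θ : ℤ // θ ≠ 0}, γ (k + θ.1 * (2 * n + 1)) ^ 2 := by
      have := pow_le_pow_left₀ (norm_nonneg _) (h1.trans (h2 ▸ h3)) 2
      rwa [mul_pow, Real.sq_sqrt hA0, Real.sq_sqrt hG0] at this
    refine h5.trans ?_
    refine mul_le_mul_of_nonneg_left ?_ hA0
    rw [hBd]
    exact Gbound hnn hsym hsum hmono n hn k hk.1 hk.2
  -- combine
  have sumA := Asum hS0 hSsum hS1 n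
  have part2' : (∑ k ∈ Finset.Icc (-(n : ℤ)) (n : ℤ),
      ‖∑' θ : {θ : ℤ // θ ≠ 0}, α (k + θ.1 * (2 * n + 1))‖ ^ 2) ≤ Bd := by
    calc (∑ k ∈ Finset.Icc (-(n : ℤ)) (n : ℤ),
        ‖∑' θ : {θ : ℤ // θ ≠ 0}, α (k + θ.1 * (2 * n + 1))‖ ^ 2)
        ≤ ∑ k ∈ Finset.Icc (-(n : ℤ)) (n : ℤ),
            (∑' θ : {θ : ℤ // θ ≠ 0}, S (k + θ.1 * (2 * n + 1))) * Bd :=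
          Finset.sum_le_sum part2
      _ = (∑ k ∈ Finset.Icc (-(n : ℤ)) (n : ℤ),
            ∑' θ : {θ : ℤ // θ ≠ 0}, S (k + θ.1 * (2 * n + 1))) * Bd :=
          (Finset.sum_mul _ _ _).symm
      _ ≤ 1 * Bd := mul_le_mul_of_nonneg_right sumA hBd0
      _ = Bd := one_mul _
  have hfinal := add_le_add part1 part2'
  refine hfinal.trans (le_of_eq ?_)
  rw [hBd]
  ring
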